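/- If g, h : C → C are chain homotopic self-maps of an R-module chain complex C, then the algebraic mapping tori T(g) and T(h) are isomorphic as R[x,x⁻¹]-module chain complexes. -/

import Mathlib

open CategoryTheory LaurentPolynomial

/-- Degreewise scalar multiplication by `a` as a chain self-map. -/
def smulChainMap {A : Type*} [CommRing A] {ι : Type*} {c : ComplexShape ι} (a : A)
    (K : HomologicalComplex (ModuleCat A) c) : K ⟶ K where
  f n := ModuleCat.ofHom (a • LinearMap.id)
  comm' := by
    intro i j _
    ext x
    show (K.d i j) (a • x) = a • (K.d i j) x
    exact (K.d i j).hom.map_smul a x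

/-- The algebraic mapping torus `T(h) = Cone(h⊗1 − 1⊗x)` of a self-map `h` of a complex
of `R`-modules, a complex of `R[x,x⁻¹]`-modules. -/
noncomputable def mappingTorus {R : Type*} [CommRing R] {C : CochainComplex (ModuleCat R) ℤ}
    (h : C ⟶ C) : CochainComplex (ModuleCat (LaurentPolynomial R)) ℤ :=
  CochainComplex.mappingCone
    (((ModuleCat.extendScalars (algebraMap R (LaurentPolynomial R))).mapHomologicalComplex
        (ComplexShape.up ℤ)).map h - smulChainMap (T 1) _)


universe uw u₁ u₂ in
private instance stmt6.extendScalarsAdditive {R : Type u₁} {S : Type u₂} [CommRing R] [CommRing S]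
    (f : R →+* S) : (ModuleCat.extendScalars.{u₁, u₂, max u₂ uw} f).Additive := by
  have : Limits.PreservesBinaryBiproducts (ModuleCat.extendScalars f) :=
    Limits.preservesBinaryBiproducts_of_preservesBinaryCoproducts _
  exact Functor.additive_of_preservesBinaryBiproducts _

open CategoryTheory Limits CochainComplex HomComplex mappingCone in
private def stmt6.adj {V : Type*} [Category V] [Preadditive V] [HasBinaryBiproducts V]
    {K L : CochainComplex V ℤ} {φ₁ φ₂ : K ⟶ L} (H : Homotopy φ₁ φ₂) :
    Homotopy (φ₁ ≫ 𝟙 L) (𝟙 K ≫ φ₂) :=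
  ((Homotopy.ofEq (Category.comp_id φ₁)).trans H).trans (Homotopy.ofEq (Category.id_comp φ₂).symm)

open CategoryTheory Limits CochainComplex HomComplex mappingCone in
private lemma stmt6.key {V : Type*} [Category V] [Preadditive V] [HasBinaryBiproducts V]
    {K L : CochainComplex V ℤ} {φ₁ φ₂ : K ⟶ L} (H : Homotopy φ₁ φ₂) (H' : Homotopy φ₂ φ₁)
    (hz : ∀ i j, H.hom i j + H'.hom i j = 0) :
    mapOfHomotopy (stmt6.adj H) ≫ mapOfHomotopy (stmt6.adj H') = 𝟙 _ := by
  ext p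
  rw [ext_from_iff _ (p+1) p rfl]
  constructor
  · simp [mapOfHomotopy, stmt6.adj, Cochain.ofHomotopy]
    rw [add_assoc, ← Preadditive.add_comp, add_comm (H'.hom _ _), hz, zero_comp, add_zero]
  · simp [mapOfHomotopy, stmt6.adj]

/-- If `g, h : C → C` are chain homotopic self-maps of an `R`-module chain
complex, then the algebraic mapping tori `T(g)` and `T(h)` are isomorphic as
`R[x,x⁻¹]`-module chain complexes. -/
theorem stmt6 (R : Type*) [CommRing R] (C : CochainComplex (ModuleCat R) ℤ)
    (g h : C ⟶ C) (H : Homotopy g h) :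
    Nonempty (mappingTorus g ≅ mappingTorus h) := by
  classical
  let F := (ModuleCat.extendScalars (algebraMap R (LaurentPolynomial R))).mapHomologicalComplex
    (ComplexShape.up ℤ)
  let x := smulChainMap (T 1) (F.obj C)
  have Hm : Homotopy (F.map g) (F.map h) :=
    (ModuleCat.extendScalars (algebraMap R (LaurentPolynomial R))).mapHomotopy H
  have H2 : Homotopy (F.map g - x) (F.map h - x) :=
    (Homotopy.ofEq (sub_eq_add_neg _ _)).trans
      ((Hm.add (Homotopy.refl (-x))).trans (Homotopy.ofEq (sub_eq_add_neg _ _).symm))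
  exact ⟨⟨CochainComplex.mappingCone.mapOfHomotopy (stmt6.adj H2),
    CochainComplex.mappingCone.mapOfHomotopy (stmt6.adj H2.symm),
    stmt6.key H2 H2.symm (by simp [Homotopy.symm]),
    stmt6.key H2.symm H2 (by simp [Homotopy.symm])⟩⟩
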